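/- Let α ≥ 2 and N_α(x) = Σ_{m≥0} (-2x²)^m/(2m)! · (α/2)(α/2-1)···(α/2-m+1). The smallest positive zero s_α of N_α satisfies √(2/α) ≤ s_α ≤ 1. -/

import Mathlib

open Finset Filter Set
open scoped Topology

/-- The confluent hypergeometric function `₁F₁(-α/2, 1/2, x²/2)` given by its power series. -/
noncomputable def Nfun (α : ℝ) (x : ℝ) : ℝ :=
  ∑' m : ℕ, ((-2 * x ^ 2) ^ m / ((2 * m).factorial : ℝ)) * ∏ j ∈ Finset.range m, (α / 2 - j)

noncomputable def dcoef (α : ℝ) (m : ℕ) : ℝ :=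
  (-2 : ℝ) ^ m / ((2 * m).factorial : ℝ) * ∏ j ∈ Finset.range m, (α / 2 - j)

noncomputable def ccoef (α : ℝ) (n : ℕ) : ℝ :=
  if n % 2 = 0 then dcoef α (n / 2) else 0

lemma ccoef_even (α : ℝ) (m : ℕ) : ccoef α (2 * m) = dcoef α m := by
  simp [ccoef, Nat.mul_mod_right, Nat.mul_div_cancel_left _ (by norm_num : 0 < 2)]

lemma ccoef_odd (α : ℝ) (m : ℕ) : ccoef α (2 * m + 1) = 0 := by
  rw [ccoef, if_neg (by omega)]

lemma dcoef_zero (α : ℝ) : dcoef α 0 = 1 := by simp [dcoef]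

lemma ccoef_zero (α : ℝ) : ccoef α 0 = 1 := by
  simpa using ccoef_even α 0 ▸ dcoef_zero α

lemma ccoef_one (α : ℝ) : ccoef α 1 = 0 := by
  simpa using ccoef_odd α 0

lemma ccoef_rec (α : ℝ) (n : ℕ) :
    ((n : ℝ) + 1) * ((n : ℝ) + 2) * ccoef α (n + 2) = ((n : ℝ) - α) * ccoef α n := by
  rcases Nat.even_or_odd n with ⟨m, rfl⟩ | ⟨m, rfl⟩
  · have hmm : m + m = 2 * m := by ring
    rw [hmm]
    have h2 : 2 * m + 2 = 2 * (m + 1) := by ring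
    rw [h2, ccoef_even, ccoef_even]
    have hfac : ((2 * (m + 1)).factorial : ℝ) =
        ((2 * m : ℕ) + 2) * (((2 * m : ℕ) + 1) * ((2 * m).factorial : ℝ)) := by
      have : 2 * (m + 1) = (2 * m + 1) + 1 := by ring
      rw [this, Nat.factorial_succ, Nat.factorial_succ]
      push_cast
      ring
    unfold dcoef
    rw [Finset.prod_range_succ, hfac]
    have hne : ((2 * m).factorial : ℝ) ≠ 0 := by positivity
    push_cast
    field_simp
    ring
  · have h1 : 2 * m + 1 + 2 = 2 * (m + 1) + 1 := by ring
    rw [h1, ccoef_odd, ccoef_odd]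
    ring

/-- Property: the series with coefficients `c` converges absolutely for every radius. -/
def SummableAll (c : ℕ → ℝ) : Prop := ∀ r : ℝ, 0 ≤ r → Summable fun n => |c n| * r ^ n

lemma summableAll_ccoef {α : ℝ} (hα : 2 ≤ α) : SummableAll (ccoef α) := by
  intro r hr
  have hinj : Function.Injective (fun m : ℕ => 2 * m) := fun a b h => by
    simp only at h; omega
  have hvan : ∀ x ∉ Set.range (fun m : ℕ => 2 * m), |ccoef α x| * r ^ x = 0 := by
    intro n hn
    have hodd : n % 2 = 1 := by
      rcases Nat.even_or_odd n with ⟨m, rfl⟩ | ⟨m, rfl⟩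
      · exact absurd ⟨m, show 2 * m = m + m by omega⟩ hn
      · omega
    rw [ccoef, if_neg (by omega)]
    simp
  rw [← Function.Injective.summable_iff hinj hvan]
  have ha1 : (1 : ℝ) ≤ α / 2 := by linarith
  have key : ∀ m : ℕ, |ccoef α (2 * m)| * r ^ (2 * m) ≤ (2 * (α / 2) * r ^ 2) ^ m / m.factorial := by
    intro m
    rw [ccoef_even, dcoef]
    have h1 : |(-2 : ℝ) ^ m / ((2 * m).factorial : ℝ) * ∏ j ∈ Finset.range m, (α / 2 - j)|
        = 2 ^ m / ((2 * m).factorial : ℝ) * |∏ j ∈ Finset.range m, (α / 2 - j)| := by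
      rw [abs_mul, abs_div, abs_pow]
      norm_num
    rw [h1, Finset.abs_prod]
    have hprod : (∏ j ∈ Finset.range m, |α / 2 - (j : ℝ)|) ≤ (α / 2) ^ m * (m.factorial : ℝ) := by
      have : (∏ j ∈ Finset.range m, |α / 2 - (j : ℝ)|)
          ≤ ∏ j ∈ Finset.range m, (α / 2 * ((j : ℝ) + 1)) := by
        apply Finset.prod_le_prod (fun j _ => abs_nonneg _)
        intro j _
        rw [abs_le]
        constructor
        · nlinarith [Nat.cast_nonneg (α := ℝ) j]
        · nlinarith [Nat.cast_nonneg (α := ℝ) j]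
      calc (∏ j ∈ Finset.range m, |α / 2 - (j : ℝ)|)
          ≤ ∏ j ∈ Finset.range m, (α / 2 * ((j : ℝ) + 1)) := this
        _ = (α / 2) ^ m * ∏ j ∈ Finset.range m, ((j : ℝ) + 1) := by
            rw [Finset.prod_mul_distrib, Finset.prod_const, Finset.card_range]
        _ = (α / 2) ^ m * (m.factorial : ℝ) := by
            congr 1
            exact_mod_cast Finset.prod_range_add_one_eq_factorial m
    have hfacs : (m.factorial : ℝ) * (m.factorial : ℝ) ≤ ((2 * m).factorial : ℝ) := by
      have := Nat.factorial_mul_factorial_dvd_factorial_add m m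
      have h2 : m + m = 2 * m := by ring
      rw [h2] at this
      exact_mod_cast Nat.le_of_dvd (Nat.factorial_pos _) this
    have hfacpos : (0 : ℝ) < ((2 * m).factorial : ℝ) := by positivity
    have hmf : (0 : ℝ) < (m.factorial : ℝ) := by positivity
    calc 2 ^ m / ((2 * m).factorial : ℝ) * (∏ j ∈ Finset.range m, |α / 2 - (j : ℝ)|) * r ^ (2 * m)
        ≤ 2 ^ m / ((2 * m).factorial : ℝ) * ((α / 2) ^ m * (m.factorial : ℝ)) * r ^ (2 * m) := by
          have : (0:ℝ) ≤ 2 ^ m / ((2 * m).factorial : ℝ) := by positivity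
          have hrm : (0:ℝ) ≤ r ^ (2*m) := by positivity
          nlinarith [mul_le_mul_of_nonneg_left hprod this]
      _ ≤ (2 * (α / 2) * r ^ 2) ^ m / m.factorial := by
          have hB : (0:ℝ) ≤ 2 ^ m * (α / 2) ^ m * r ^ (2 * m) := by positivity
          have h5 : (m.factorial : ℝ) / ((2 * m).factorial : ℝ) ≤ 1 / (m.factorial : ℝ) := by
            rw [div_le_div_iff₀ hfacpos hmf]
            nlinarith
          calc 2 ^ m / ((2 * m).factorial : ℝ) * ((α / 2) ^ m * (m.factorial : ℝ)) * r ^ (2 * m)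
              = (2 ^ m * (α / 2) ^ m * r ^ (2 * m)) *
                ((m.factorial : ℝ) / ((2 * m).factorial : ℝ)) := by ring
            _ ≤ (2 ^ m * (α / 2) ^ m * r ^ (2 * m)) * (1 / (m.factorial : ℝ)) :=
                mul_le_mul_of_nonneg_left h5 hB
            _ = (2 * (α / 2) * r ^ 2) ^ m / m.factorial := by
                rw [mul_pow, mul_pow, ← pow_mul]
                ring
  apply Summable.of_nonneg_of_le (fun m => by positivity) key
  simpa [div_eq_mul_inv] using Real.summable_pow_div_factorial (2 * (α / 2) * r ^ 2)

lemma SummableAll.shift {c : ℕ → ℝ} (h : SummableAll c) :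
    SummableAll (fun n => ((n : ℝ) + 1) * c (n + 1)) := by
  intro r hr
  have hR : (0 : ℝ) ≤ 2 * (r + 1) := by linarith
  have hsum := h (2 * (r + 1)) hR
  have hsum' : Summable fun n : ℕ => |c (n + 1)| * (2 * (r + 1)) ^ (n + 1) :=
    (summable_nat_add_iff (f := fun n : ℕ => |c n| * (2 * (r + 1)) ^ n) 1).mpr hsum
  apply Summable.of_nonneg_of_le (fun n => by positivity) _ hsum'
  intro n
  have h1 : ((n : ℝ) + 1) * r ^ n ≤ (2 * (r + 1)) ^ (n + 1) := by
    have ha : ((n : ℝ) + 1) ≤ 2 ^ (n + 1) := by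
      have := Nat.lt_two_pow_self (n := n + 1)
      exact_mod_cast this.le
    have hb : r ^ n ≤ (r + 1) ^ (n + 1) := by
      calc r ^ n ≤ (r + 1) ^ n := pow_le_pow_left₀ hr (by linarith) n
        _ ≤ (r + 1) ^ (n + 1) := pow_le_pow_right₀ (by linarith) (Nat.le_succ n)
    calc ((n : ℝ) + 1) * r ^ n ≤ 2 ^ (n + 1) * (r + 1) ^ (n + 1) := by
          apply mul_le_mul ha hb (by positivity) (by positivity)
      _ = (2 * (r + 1)) ^ (n + 1) := (mul_pow _ _ _).symm
  calc |((n : ℝ) + 1) * c (n + 1)| * r ^ n = |c (n + 1)| * (((n : ℝ) + 1) * r ^ n) := by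
        rw [abs_mul, abs_of_nonneg (by positivity : (0:ℝ) ≤ (n : ℝ) + 1)]
        ring
    _ ≤ |c (n + 1)| * (2 * (r + 1)) ^ (n + 1) :=
        mul_le_mul_of_nonneg_left h1 (abs_nonneg _)

lemma SummableAll.summable {c : ℕ → ℝ} (h : SummableAll c) (x : ℝ) :
    Summable fun n => c n * x ^ n := by
  apply Summable.of_abs
  have := h |x| (abs_nonneg x)
  apply this.congr
  intro n
  rw [abs_mul, abs_pow]

lemma SummableAll.hasDerivAt {c : ℕ → ℝ} (h : SummableAll c) (x : ℝ) :
    HasDerivAt (fun z => ∑' n, c n * z ^ n)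
      (∑' n : ℕ, ((n : ℝ) + 1) * c (n + 1) * x ^ n) x := by
  set R : ℝ := |x| + 1 with hRdef
  have hR0 : (0 : ℝ) ≤ R := by positivity
  have hR1 : (1 : ℝ) ≤ R := by rw [hRdef]; have := abs_nonneg x; linarith
  set u : ℕ → ℝ := fun n => (n : ℝ) * |c n| * R ^ (n - 1) with hu_def
  have hu : Summable u := by
    rw [← summable_nat_add_iff 1]
    have := h.shift R hR0
    apply this.congr
    intro n
    simp only [hu_def]
    rw [abs_mul, abs_of_nonneg (by positivity : (0:ℝ) ≤ (n : ℝ) + 1)]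
    push_cast
    ring_nf
  have hg : ∀ (n : ℕ) (y : ℝ), y ∈ Set.Ioo (-R) R →
      HasDerivAt (fun z => c n * z ^ n) (c n * ((n : ℝ) * y ^ (n - 1))) y :=
    fun n y _ => (hasDerivAt_pow n y).const_mul (c n)
  have hg' : ∀ (n : ℕ) (y : ℝ), y ∈ Set.Ioo (-R) R →
      ‖c n * ((n : ℝ) * y ^ (n - 1))‖ ≤ u n := by
    intro n y hy
    have hyR : |y| ≤ R := (abs_lt.mpr ⟨hy.1, hy.2⟩).le
    rw [Real.norm_eq_abs, abs_mul, abs_mul, abs_pow,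
      abs_of_nonneg (Nat.cast_nonneg (α := ℝ) n)]
    have : |y| ^ (n - 1) ≤ R ^ (n - 1) := pow_le_pow_left₀ (abs_nonneg y) hyR _
    calc |c n| * ((n : ℝ) * |y| ^ (n - 1)) ≤ |c n| * ((n : ℝ) * R ^ (n - 1)) := by
          apply mul_le_mul_of_nonneg_left _ (abs_nonneg _)
          exact mul_le_mul_of_nonneg_left this (Nat.cast_nonneg n)
      _ = u n := by simp [hu_def]; ring
  have hx : x ∈ Set.Ioo (-R) R := by
    constructor <;> [nlinarith [abs_nonneg x, neg_abs_le x]; nlinarith [le_abs_self x]]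
  have h0 : (0 : ℝ) ∈ Set.Ioo (-R) R := by constructor <;> nlinarith
  have key := hasDerivAt_tsum_of_isPreconnected hu isOpen_Ioo
    ((convex_Ioo (-R) R).isPreconnected) hg hg' h0 (h.summable 0) hx
  have hsum2 : Summable fun n => c n * ((n : ℝ) * x ^ (n - 1)) :=
    Summable.of_norm_bounded hu (fun n => hg' n x hx)
  have heq : (∑' n, c n * ((n : ℝ) * x ^ (n - 1)))
      = ∑' n : ℕ, ((n : ℝ) + 1) * c (n + 1) * x ^ n := by
    rw [Summable.tsum_eq_zero_add hsum2]
    simp only [Nat.cast_zero, zero_mul, mul_zero, zero_add]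
    apply tsum_congr
    intro n
    push_cast
    ring_nf
  rw [← heq]
  exact key

noncomputable def Nf (α : ℝ) (x : ℝ) : ℝ := ∑' n : ℕ, ccoef α n * x ^ n

noncomputable def Nf1 (α : ℝ) (x : ℝ) : ℝ :=
  ∑' n : ℕ, ((n : ℝ) + 1) * ccoef α (n + 1) * x ^ n

noncomputable def Nf2 (α : ℝ) (x : ℝ) : ℝ :=
  ∑' n : ℕ, ((n : ℝ) + 1) * (((n + 1 : ℕ) : ℝ) + 1) * ccoef α (n + 1 + 1) * x ^ n

lemma summableAll_c1 {α : ℝ} (hα : 2 ≤ α) :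
    SummableAll (fun n => ((n : ℝ) + 1) * ccoef α (n + 1)) :=
  (summableAll_ccoef hα).shift

lemma summableAll_c2 {α : ℝ} (hα : 2 ≤ α) :
    SummableAll (fun n => ((n : ℝ) + 1) * (((n + 1 : ℕ) : ℝ) + 1) * ccoef α (n + 1 + 1)) := by
  have h := (summableAll_c1 hα).shift
  intro r hr
  apply (h r hr).congr
  intro n
  congr 1
  ring

lemma hasDerivAt_Nf {α : ℝ} (hα : 2 ≤ α) (x : ℝ) : HasDerivAt (Nf α) (Nf1 α x) x :=
  (summableAll_ccoef hα).hasDerivAt x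

lemma hasDerivAt_Nf1 {α : ℝ} (hα : 2 ≤ α) (x : ℝ) : HasDerivAt (Nf1 α) (Nf2 α x) x := by
  have h := (summableAll_c1 hα).hasDerivAt x
  apply h.congr_deriv
  apply tsum_congr
  intro n
  ring

lemma Nfun_eq_Nf {α : ℝ} (x : ℝ) : Nfun α x = Nf α x := by
  rw [Nfun, Nf]
  have hinj : Function.Injective (fun m : ℕ => 2 * m) := fun a b h => by
    simp only at h; omega
  have hvan : Function.support (fun n => ccoef α n * x ^ n) ⊆
      Set.range (fun m : ℕ => 2 * m) := by
    intro n hn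
    by_contra hcon
    have hodd : n % 2 = 1 := by
      rcases Nat.even_or_odd n with ⟨m, rfl⟩ | ⟨m, rfl⟩
      · exact absurd ⟨m, show 2 * m = m + m by omega⟩ hcon
      · omega
    apply hn
    show ccoef α n * x ^ n = 0
    rw [ccoef, if_neg (by omega)]
    simp
  rw [← Function.Injective.tsum_eq hinj hvan]
  apply tsum_congr
  intro m
  rw [ccoef_even, dcoef]
  have : (-2 * x ^ 2) ^ m = (-2 : ℝ) ^ m * x ^ (2 * m) := by
    rw [mul_pow, ← pow_mul]
  rw [this]
  ring

lemma Nf_zero (α : ℝ) : Nf α 0 = 1 := by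
  rw [Nf, tsum_eq_single 0 (fun n hn => by
    rw [zero_pow hn, mul_zero])]
  simp [ccoef_zero]

lemma Nf1_zero (α : ℝ) : Nf1 α 0 = 0 := by
  rw [Nf1, tsum_eq_single 0 (fun n hn => by
    rw [zero_pow hn, mul_zero])]
  simp [ccoef_one]

lemma Nf_ode {α : ℝ} (hα : 2 ≤ α) (x : ℝ) :
    Nf2 α x = x * Nf1 α x - α * Nf α x := by
  have hc0 := summableAll_ccoef hα
  have hc1 := summableAll_c1 hα
  -- h n = n * c n * x^n
  set h : ℕ → ℝ := fun n => (n : ℝ) * ccoef α n * x ^ n with hh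
  have hsummh : Summable h := by
    rw [← summable_nat_add_iff (f := h) 1]
    have := (hc1.summable x).mul_right x
    apply this.congr
    intro n
    rw [hh]
    push_cast
    ring
  have hxN1 : x * Nf1 α x = ∑' n : ℕ, h n := by
    rw [Nf1, ← tsum_mul_left, Summable.tsum_eq_zero_add hsummh]
    have h0 : h 0 = 0 := by rw [hh]; simp
    rw [h0, zero_add]
    apply tsum_congr
    intro n
    rw [hh]
    push_cast
    ring
  have hsummN : Summable fun n : ℕ => α * (ccoef α n * x ^ n) := (hc0.summable x).mul_left α
  have : Nf2 α x = ∑' n : ℕ, (h n - α * (ccoef α n * x ^ n)) := by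
    rw [Nf2]
    apply tsum_congr
    intro n
    have hrec := ccoef_rec α n
    have h2 : n + 1 + 1 = n + 2 := rfl
    rw [hh]
    calc ((n : ℝ) + 1) * (((n + 1 : ℕ) : ℝ) + 1) * ccoef α (n + 1 + 1) * x ^ n
        = (((n : ℝ) + 1) * ((n : ℝ) + 2) * ccoef α (n + 2)) * x ^ n := by
          rw [h2]; push_cast; ring
      _ = (((n : ℝ) - α) * ccoef α n) * x ^ n := by rw [hrec]
      _ = (n : ℝ) * ccoef α n * x ^ n - α * (ccoef α n * x ^ n) := by ring
  rw [this, Summable.tsum_sub hsummh hsummN, hxN1, Nf, tsum_mul_left]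

lemma hasDerivAt_exp_part (x : ℝ) :
    HasDerivAt (fun y : ℝ => Real.exp (-y ^ 2 / 2)) (Real.exp (-x ^ 2 / 2) * (-x)) x := by
  have h1 : HasDerivAt (fun y : ℝ => -y ^ 2 / 2) (-x) x := by
    have h2 := ((hasDerivAt_pow 2 x).neg.div_const 2)
    refine h2.congr_deriv ?_
    push_cast
    ring
  exact h1.exp

lemma hasDerivAt_W {α : ℝ} (hα : 2 ≤ α) (x : ℝ) :
    HasDerivAt (fun y : ℝ => Real.exp (-y ^ 2 / 2) * (Nf α y * (-2 * y) - Nf1 α y * (1 - y ^ 2)))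
      ((α - 2) * (1 - x ^ 2) * Real.exp (-x ^ 2 / 2) * Nf α x) x := by
  have hQ' : HasDerivAt (fun y : ℝ => -2 * y) (-2) x := by
    simpa using (hasDerivAt_id x).const_mul (-2 : ℝ)
  have hQ : HasDerivAt (fun y : ℝ => 1 - y ^ 2) (-(2 * x)) x := by
    have := ((hasDerivAt_pow 2 x).const_sub 1)
    refine this.congr_deriv ?_
    push_cast
    ring
  have hinner := ((hasDerivAt_Nf hα x).mul hQ').sub ((hasDerivAt_Nf1 hα x).mul hQ)
  have hfull := (hasDerivAt_exp_part x).mul hinner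
  refine hfull.congr_deriv ?_
  rw [Nf_ode hα x]
  simp only [Pi.mul_apply, Pi.sub_apply]
  ring

lemma hasDerivAt_Wt {α : ℝ} (hα : 2 ≤ α) (x : ℝ) :
    HasDerivAt
      (fun y : ℝ => Real.exp (-y ^ 2 / 2) * (Nf α y * (-(α * y)) - Nf1 α y * (1 - α / 2 * y ^ 2)))
      (-(α * (α - 2) / 2 * x ^ 2 * Real.exp (-x ^ 2 / 2) * Nf α x)) x := by
  have hQ' : HasDerivAt (fun y : ℝ => -(α * y)) (-α) x := by
    exact ((hasDerivAt_id x).const_mul α).neg.congr_deriv (by simp)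
  have hQ : HasDerivAt (fun y : ℝ => 1 - α / 2 * y ^ 2) (-(α * x)) x := by
    have := (((hasDerivAt_pow 2 x).const_mul (α / 2)).const_sub 1)
    refine this.congr_deriv ?_
    push_cast
    ring
  have hinner := ((hasDerivAt_Nf hα x).mul hQ').sub ((hasDerivAt_Nf1 hα x).mul hQ)
  have hfull := (hasDerivAt_exp_part x).mul hinner
  refine hfull.congr_deriv ?_
  rw [Nf_ode hα x]
  simp only [Pi.mul_apply, Pi.sub_apply]
  ring

theorem stmt17 (α : ℝ) (hα : 2 ≤ α) (s : ℝ)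
    (hs : IsLeast {x : ℝ | 0 < x ∧ Nfun α x = 0} s) :
    Real.sqrt (2 / α) ≤ s ∧ s ≤ 1 := by
  obtain ⟨⟨hspos, hszero⟩, hlb⟩ := hs
  rcases eq_or_lt_of_le hα with heq | hα2
  · -- α = 2 : Nfun 2 x = 1 - x², so s = 1
    subst heq
    have h2 : ∀ x : ℝ, Nfun 2 x = 1 - x ^ 2 := by
      intro x
      rw [Nfun]
      rw [tsum_eq_sum (s := Finset.range 2) ?_]
      · norm_num [Finset.sum_range_succ]
        ring
      · intro m hm
        have hm2 : 2 ≤ m := by simp [Finset.mem_range] at hm; omega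
        apply mul_eq_zero_of_right
        apply Finset.prod_eq_zero (Finset.mem_range.mpr (by omega : 1 < m))
        norm_num
    rw [h2 s] at hszero
    have hs1 : s = 1 := by nlinarith
    subst hs1
    norm_num
  · -- α > 2
    have hszero' : Nf α s = 0 := by rw [← Nfun_eq_Nf]; exact hszero
    have hcont : Continuous (Nf α) := continuous_iff_continuousAt.mpr
      fun x => (hasDerivAt_Nf hα x).differentiableAt.continuousAt
    have hpos : ∀ x : ℝ, 0 ≤ x → x < s → 0 < Nf α x := by
      intro x hx0 hxs
      by_contra hcon
      push_neg at hcon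
      have hxne : x ≠ 0 := by
        intro h
        rw [h, Nf_zero] at hcon
        linarith
      have hx0' : 0 < x := lt_of_le_of_ne hx0 (Ne.symm hxne)
      have h0mem : (0 : ℝ) ∈ Set.Icc (Nf α x) (Nf α 0) := by
        rw [Nf_zero]; exact ⟨hcon, zero_le_one⟩
      obtain ⟨cz, hcz, hcz0⟩ :=
        intermediate_value_Icc' hx0'.le hcont.continuousOn h0mem
      have hczpos : 0 < cz := by
        rcases eq_or_lt_of_le hcz.1 with h | h
        · exfalso; rw [← h, Nf_zero] at hcz0; linarith
        · exact h
      have := hlb ⟨hczpos, by rw [Nfun_eq_Nf]; exact hcz0⟩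
      linarith [hcz.2]
    constructor
    · -- lower bound
      by_contra hub
      push_neg at hub
      have hα0 : (0 : ℝ) < α := by linarith
      have hs2 : s ^ 2 < 2 / α := (Real.lt_sqrt hspos.le).mp hub
      have h1q : (0 : ℝ) < 1 - α / 2 * s ^ 2 := by
        have : α * s ^ 2 < 2 := by
          have := (lt_div_iff₀ hα0).mp hs2
          linarith
        linarith
      set Wt : ℝ → ℝ := fun y =>
        Real.exp (-y ^ 2 / 2) * (Nf α y * (-(α * y)) - Nf1 α y * (1 - α / 2 * y ^ 2)) with hWtdef
      have hWt := fun x => hasDerivAt_Wt hα (α := α) x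
      have hWtcont : ContinuousOn Wt (Set.Icc 0 s) :=
        (continuous_iff_continuousAt.mpr
          fun x => (hWt x).differentiableAt.continuousAt).continuousOn
      have hanti : StrictAntiOn Wt (Set.Icc 0 s) := by
        apply strictAntiOn_of_deriv_neg (convex_Icc 0 s) hWtcont
        intro x hx
        rw [interior_Icc] at hx
        rw [(hWt x).deriv]
        have hN := hpos x hx.1.le hx.2
        have h1 : (0 : ℝ) < α * (α - 2) / 2 := by nlinarith
        have h2 : (0 : ℝ) < x ^ 2 := pow_pos hx.1 2
        have h3 := Real.exp_pos (-x ^ 2 / 2)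
        have := mul_pos (mul_pos (mul_pos h1 h2) h3) hN
        linarith
      have hWt0 : Wt 0 = 0 := by
        rw [hWtdef]
        simp [Nf1_zero]
      have hWtneg : Wt s < 0 := by
        have := hanti (Set.left_mem_Icc.mpr hspos.le) (Set.right_mem_Icc.mpr hspos.le) hspos
        rw [hWt0] at this
        exact this
      have hWtsval : Wt s = -(Real.exp (-s ^ 2 / 2) * (Nf1 α s * (1 - α / 2 * s ^ 2))) := by
        rw [hWtdef]
        simp only
        rw [hszero']
        ring
      have hN1pos : 0 < Nf1 α s := by
        rw [hWtsval] at hWtneg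
        have hexp := Real.exp_pos (-s ^ 2 / 2)
        by_contra hcon
        push_neg at hcon
        have h4 : Nf1 α s * (1 - α / 2 * s ^ 2) ≤ 0 :=
          mul_nonpos_of_nonpos_of_nonneg hcon h1q.le
        have h5 : Real.exp (-s ^ 2 / 2) * (Nf1 α s * (1 - α / 2 * s ^ 2)) ≤ 0 :=
          mul_nonpos_of_nonneg_of_nonpos hexp.le h4
        linarith
      have hN1nonpos : Nf1 α s ≤ 0 := by
        have ht : Filter.Tendsto (slope (Nf α) s) (nhdsWithin s (Set.Iio s))
            (nhds (Nf1 α s)) :=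
          (hasDerivAt_iff_tendsto_slope.mp (hasDerivAt_Nf hα s)).mono_left
            (nhdsWithin_mono s (fun y hy => ne_of_lt hy))
        have hev : ∀ᶠ y in nhdsWithin s (Set.Iio s), slope (Nf α) s y ≤ 0 := by
          filter_upwards [Ioo_mem_nhdsLT_of_mem
            (⟨hspos, le_refl s⟩ : s ∈ Set.Ioc 0 s)] with y hy
          rw [slope_def_field, hszero', sub_zero]
          apply div_nonpos_of_nonneg_of_nonpos (hpos y hy.1.le hy.2).le
          linarith [hy.2]
        exact le_of_tendsto ht hev
      linarith
    · -- upper bound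
      by_contra hub
      push_neg at hub
      set W : ℝ → ℝ := fun y =>
        Real.exp (-y ^ 2 / 2) * (Nf α y * (-2 * y) - Nf1 α y * (1 - y ^ 2)) with hWdef
      have hW := fun x => hasDerivAt_W hα (α := α) x
      have hWcont : ContinuousOn W (Set.Icc 0 1) :=
        (continuous_iff_continuousAt.mpr
          fun x => (hW x).differentiableAt.continuousAt).continuousOn
      have hmono : StrictMonoOn W (Set.Icc 0 1) := by
        apply strictMonoOn_of_deriv_pos (convex_Icc 0 1) hWcont
        intro x hx
        rw [interior_Icc] at hx
        rw [(hW x).deriv]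
        have hN := hpos x hx.1.le (lt_trans hx.2 hub)
        have h1 : (0 : ℝ) < α - 2 := by linarith
        have h2 : (0 : ℝ) < 1 - x ^ 2 := by nlinarith [hx.1, hx.2]
        have h3 := Real.exp_pos (-x ^ 2 / 2)
        have := mul_pos (mul_pos (mul_pos h1 h2) h3) hN
        linarith
      have hW0 : W 0 = 0 := by
        rw [hWdef]
        simp [Nf1_zero]
      have hWpos : 0 < W 1 := by
        have := hmono (Set.left_mem_Icc.mpr zero_le_one)
          (Set.right_mem_Icc.mpr zero_le_one) one_pos
        rw [hW0] at this
        exact this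
      have hN1 := hpos 1 zero_le_one hub
      have hW1 : W 1 = -(2 * Real.exp (-1 ^ 2 / 2) * Nf α 1) := by
        rw [hWdef]
        norm_num
        ring
      rw [hW1] at hWpos
      have hexp := Real.exp_pos (-(1 : ℝ) ^ 2 / 2)
      nlinarith [mul_pos hexp hN1]
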